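/- Let n ≥ 1 be a natural number and let x_1, …, x_n be pairwise distinct non-negative real numbers. For each i define a_i := (∏_{j≠i} x_j) / (∏_{j≠i} (x_j − x_i)). Then ∏_{i=1}^n (1 + x_i)^{a_i} ≤ exp((1/n) ∏_{i=1}^n x_i). -/

import Mathlib

open Finset
open Set Polynomial



lemma iter_rolle : ∀ (k : ℕ) (f : ℝ → ℝ),
    (∀ (m : ℕ) (t : ℝ), (-1:ℝ) < t → DifferentiableAt ℝ (deriv^[m] f) t) →
    ∀ (p : Fin (k+1) → ℝ), StrictMono p → (∀ i, (-1:ℝ) < p i) →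
    (∀ i, f (p i) = 0) →
    ∃ ξ, ξ ∈ Set.Icc (p 0) (p (Fin.last k)) ∧ deriv^[k] f ξ = 0 := by
  intro k
  induction k with
  | zero =>
    intro f hf p hp hp1 hz
    exact ⟨p 0, ⟨le_refl _, le_refl _⟩, hz 0⟩
  | succ k ih =>
    intro f hf p hp hp1 hz
    have hdiff : ∀ t : ℝ, (-1:ℝ) < t → DifferentiableAt ℝ f t := by
      intro t ht; simpa using hf 0 t ht
    have key : ∀ i : Fin (k+1), ∃ c ∈ Set.Ioo (p i.castSucc) (p i.succ), deriv f c = 0 := by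
      intro i
      apply exists_deriv_eq_zero (hp (Fin.castSucc_lt_succ (i := i)))
      · intro t ht
        exact ((hdiff t (lt_of_lt_of_le (hp1 _) ht.1)).continuousAt).continuousWithinAt
      · rw [hz, hz]
    choose q hq hq0 using key
    have hqmono : StrictMono q := by
      intro i j hij
      have h1 : (q i) < p i.succ := (hq i).2
      have h2 : p j.castSucc < q j := (hq j).1
      have h3 : p i.succ ≤ p j.castSucc := by
        apply hp.monotone
        rw [Fin.le_def]
        simp only [Fin.val_succ, Fin.coe_castSucc]
        omega
      linarith
    have hq1 : ∀ i, (-1:ℝ) < q i := fun i => lt_trans (hp1 _) (hq i).1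
    obtain ⟨ξ, hξ, hξ0⟩ := ih (deriv f) (fun m t ht => by
        rw [← Function.iterate_succ_apply]
        exact hf (m+1) t ht) q hqmono hq1 hq0
    refine ⟨ξ, ⟨?_, ?_⟩, ?_⟩
    · exact le_trans (le_of_lt (hq 0).1) hξ.1
    · refine le_trans hξ.2 (le_of_lt ?_)
      have := (hq (Fin.last k)).2
      simpa [Fin.succ_last] using this
    · rwa [Function.iterate_succ_apply]
noncomputable def Dlog (m : ℕ) (t : ℝ) : ℝ := (-1)^m * (Nat.factorial m) / (1+t)^(m+1)

lemma hasDerivAt_Dlog (m : ℕ) (t : ℝ) (ht : (-1:ℝ) < t) :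
    HasDerivAt (Dlog m) (Dlog (m+1) t) t := by
  have h1t : (0:ℝ) < 1 + t := by linarith
  have hpow : HasDerivAt (fun s : ℝ => (1+s)^(m+1)) ((m+1) * (1+t)^m) t := by
    have h := ((hasDerivAt_id t).const_add 1).pow (m+1)
    simp at h
    exact h
  have hne : (1+t)^(m+1) ≠ 0 := pow_ne_zero _ (ne_of_gt h1t)
  have hinv := hpow.inv hne
  have h2 := hinv.const_mul ((-1:ℝ)^m * (Nat.factorial m))
  have heq : (fun s : ℝ => ((-1:ℝ)^m * (Nat.factorial m)) * ((1+s)^(m+1))⁻¹) = Dlog m := by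
    funext s; rw [Dlog, div_eq_mul_inv]
  change HasDerivAt (fun s : ℝ => ((-1:ℝ)^m * (Nat.factorial m)) * ((1+s)^(m+1))⁻¹) _ t at h2
  rw [heq] at h2
  convert h2 using 1
  rw [Dlog]
  have : (Nat.factorial (m+1) : ℝ) = (m+1) * Nat.factorial m := by
    rw [Nat.factorial_succ]; push_cast; ring
  rw [this]
  field_simp
  ring

lemma hasDerivAt_log1p (t : ℝ) (ht : (-1:ℝ) < t) :
    HasDerivAt (fun s : ℝ => Real.log (1+s)) (Dlog 0 t) t := by
  have h1t : (0:ℝ) < 1 + t := by linarith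
  have h := ((hasDerivAt_id t).const_add 1).log (ne_of_gt h1t)
  simpa [Dlog] using h

section Psi

variable (P : ℝ[X])

noncomputable def psiF (t : ℝ) : ℝ := Real.log (1+t) - P.eval t

lemma psi_hasDerivAt (t : ℝ) (ht : (-1:ℝ) < t) :
    HasDerivAt (psiF P) (Dlog 0 t - P.derivative.eval t) t :=
  (hasDerivAt_log1p t ht).sub (P.hasDerivAt t)

lemma psi_deriv_formula : ∀ (m : ℕ) (t : ℝ), (-1:ℝ) < t →
    deriv^[m+1] (psiF P) t = Dlog m t - (derivative^[m+1] P).eval t := by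
  intro m
  induction m with
  | zero =>
    intro t ht
    simpa using (psi_hasDerivAt P t ht).deriv
  | succ m ih =>
    intro t ht
    rw [Function.iterate_succ_apply']
    have hev : deriv^[m+1] (psiF P) =ᶠ[nhds t]
        (fun s => Dlog m s - (derivative^[m+1] P).eval s) :=
      Filter.eventuallyEq_of_mem (Ioi_mem_nhds ht) (fun s hs => ih s hs)
    rw [hev.deriv_eq]
    have h := (hasDerivAt_Dlog m t ht).sub ((derivative^[m+1] P).hasDerivAt t)
    change HasDerivAt (fun s => Dlog m s - (derivative^[m+1] P).eval s) _ t at h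
    rw [h.deriv, Function.iterate_succ_apply' derivative (m+1)]

lemma psi_diff : ∀ (m : ℕ) (t : ℝ), (-1:ℝ) < t →
    DifferentiableAt ℝ (deriv^[m] (psiF P)) t := by
  intro m t ht
  match m with
  | 0 => simpa using (psi_hasDerivAt P t ht).differentiableAt
  | m+1 =>
    have hev : deriv^[m+1] (psiF P) =ᶠ[nhds t]
        (fun s => Dlog m s - (derivative^[m+1] P).eval s) :=
      Filter.eventuallyEq_of_mem (Ioi_mem_nhds ht) (fun s hs => psi_deriv_formula P m s hs)
    have hd : DifferentiableAt ℝ (fun s => Dlog m s - (derivative^[m+1] P).eval s) t :=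
      ((hasDerivAt_Dlog m t ht).sub ((derivative^[m+1] P).hasDerivAt t)).differentiableAt
    exact hev.symm.differentiableAt_iff.mp hd

end Psi


lemma iterDerivAdd (f g : ℝ[X]) (k : ℕ) :
    derivative^[k] (f + g) = derivative^[k] f + derivative^[k] g := by
  induction k with
  | zero => simp
  | succ k ih => simp [Function.iterate_succ_apply', ih]

theorem multivariate_basic_inequality (n : ℕ) (hn : 1 ≤ n) (x : Fin n → ℝ)
    (hx : ∀ i, 0 ≤ x i) (hinj : Function.Injective x) :
    ∏ i, (1 + x i) ^
        ((∏ j ∈ Finset.univ.erase i, x j) / (∏ j ∈ Finset.univ.erase i, (x j - x i))) ≤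
      Real.exp ((1 / n) * ∏ i, x i) := by
  classical
  by_cases h0 : ∃ i, x i = 0
  · obtain ⟨i0, hi0⟩ := h0
    have hL : ∀ i : Fin n, (1 + x i) ^
        ((∏ j ∈ Finset.univ.erase i, x j) / (∏ j ∈ Finset.univ.erase i, (x j - x i)))
        = (1:ℝ) := by
      intro i
      by_cases hi : i = i0
      · subst hi
        rw [hi0]
        norm_num
      · have hnum : (∏ j ∈ Finset.univ.erase i, x j) = 0 :=
          Finset.prod_eq_zero (Finset.mem_erase.mpr ⟨Ne.symm hi, Finset.mem_univ _⟩) hi0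
        rw [hnum, zero_div, Real.rpow_zero]
    have hR : (∏ i, x i) = 0 := Finset.prod_eq_zero (Finset.mem_univ i0) hi0
    rw [Finset.prod_congr rfl (fun i _ => hL i), hR]
    simp
  · push_neg at h0
    have hpos : ∀ i, 0 < x i := fun i => lt_of_le_of_ne (hx i) (Ne.symm (h0 i))
    obtain ⟨k, rfl⟩ : ∃ k, n = k + 1 := ⟨n - 1, by omega⟩
    have hinjOn : Set.InjOn x ↑(Finset.univ : Finset (Fin (k+1))) :=
      fun a _ b _ h => hinj h
    set r : Fin (k+1) → ℝ := fun i => Real.log (1 + x i) with hr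
    set L : ℝ[X] := Lagrange.interpolate Finset.univ x r with hLdef
    set ω : ℝ[X] := Lagrange.nodal Finset.univ x with hωdef
    have hω0 : ω.eval 0 ≠ 0 := by
      rw [hωdef, Lagrange.eval_nodal]
      exact Finset.prod_ne_zero_iff.mpr fun i _ => by have := hpos i; intro h; linarith
    set c : ℝ := -(L.eval 0) / ω.eval 0 with hcdef
    set P : ℝ[X] := L + C c * ω with hPdef
    -- the finset of nodes together with 0
    set s : Finset ℝ := insert (0:ℝ) (Finset.image x Finset.univ) with hsdef
    have h0s : (0:ℝ) ∉ Finset.image x Finset.univ := by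
      simp only [Finset.mem_image]
      rintro ⟨i, -, h⟩
      exact h0 i h
    have hcard : s.card = k + 1 + 1 := by
      rw [hsdef, Finset.card_insert_of_notMem h0s,
        Finset.card_image_of_injective _ hinj]
      simp
    set e := s.orderIsoOfFin hcard with hedef
    set p : Fin (k + 1 + 1) → ℝ := fun i => (e i : ℝ) with hpdef
    have hpmono : StrictMono p := fun a b hab => by
      exact_mod_cast e.strictMono hab
    have hmem : ∀ i, p i ∈ s := fun i => (e i).2
    have hsnonneg : ∀ y ∈ s, (0:ℝ) ≤ y := by
      intro y hy
      rcases Finset.mem_insert.mp hy with h | h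
      · simp [h]
      · obtain ⟨i, _, rfl⟩ := Finset.mem_image.mp h
        exact hx i
    have hp1 : ∀ i, (-1:ℝ) < p i := fun i => by
      have := hsnonneg _ (hmem i); linarith
    have hzero : ∀ y ∈ s, psiF P y = 0 := by
      intro y hy
      rcases Finset.mem_insert.mp hy with h | h
      · subst h
        rw [psiF, hPdef]
        simp only [eval_add, eval_mul, eval_C]
        rw [hcdef]
        have : -eval 0 L / eval 0 ω * eval 0 ω = -eval 0 L := by
          field_simp
        rw [this]
        simp
      · obtain ⟨i, _, rfl⟩ := Finset.mem_image.mp h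
        rw [psiF, hPdef]
        simp only [eval_add, eval_mul, eval_C]
        rw [hLdef, Lagrange.eval_interpolate_at_node r hinjOn (Finset.mem_univ i)]
        rw [hωdef, Lagrange.eval_nodal_at_node (Finset.mem_univ i)]
        rw [hr]
        ring
    obtain ⟨ξ, hξIcc, hξ0⟩ := iter_rolle (k+1) (psiF P) (psi_diff P) p hpmono hp1
      (fun i => hzero _ (hmem i))
    have hξ1 : (-1:ℝ) < ξ := lt_of_lt_of_le (hp1 0) hξIcc.1
    have hξnonneg : (0:ℝ) ≤ ξ := le_trans (hsnonneg _ (hmem 0)) hξIcc.1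
    -- compute the N-th derivative of P
    have hLdeg : L.natDegree < k+1 := by
      have hdeg : L.degree < ((k+1) : ℕ) := by
        have := Lagrange.degree_interpolate_lt (r := r) hinjOn
        rw [Finset.card_univ, Fintype.card_fin] at this
        exact this
      rcases eq_or_ne L 0 with h | h
      · rw [h]; simp
      · exact (Polynomial.natDegree_lt_iff_degree_lt h).mpr (by exact_mod_cast hdeg)
    have hLiter : derivative^[k+1] L = 0 := Polynomial.iterate_derivative_eq_zero hLdeg
    have hωdeg : ω.natDegree = k+1 := by
      rw [hωdef, Lagrange.natDegree_nodal]; simp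
    have hωiter : derivative^[k+1] ω = C (((k+1).factorial : ℝ)) := by
      have h1 : (derivative^[k+1] ω).natDegree ≤ 0 := by
        have := Polynomial.natDegree_iterate_derivative ω (k+1)
        omega
      have h2 : derivative^[k+1] ω = C ((derivative^[k+1] ω).coeff 0) :=
        (Polynomial.eq_C_of_natDegree_le_zero h1)
      rw [h2, Polynomial.coeff_iterate_derivative]
      congr 1
      rw [zero_add, Nat.descFactorial_self]
      have hlead : ω.coeff (k+1) = 1 := by
        have := (Lagrange.nodal_monic (s := (Finset.univ : Finset (Fin (k+1)))) (v := x))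
        rw [← hωdeg]
        exact this.coeff_natDegree
      rw [hlead]
      simp
    have hPiter : (derivative^[k+1] P).eval ξ = c * ((k+1).factorial : ℝ) := by
      rw [hPdef, iterDerivAdd, hLiter, Polynomial.iterate_derivative_C_mul, hωiter]
      simp
    -- the key equation
    have hkey : Dlog k ξ = c * ((k+1).factorial : ℝ) := by
      have := psi_deriv_formula P k ξ hξ1
      rw [hξ0] at this
      rw [← hPiter]
      linarith [this, hPiter]
    -- value of L at 0
    have hων : ω.eval 0 = (-1:ℝ)^(k+1) * ∏ i, x i := by
      rw [hωdef, Lagrange.eval_nodal]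
      rw [show (fun i => (0:ℝ) - x i) = fun i => (-1) * x i from by funext i; ring]
      rw [Finset.prod_mul_distrib, Finset.prod_const]
      simp
    have hLeval : L.eval 0 = -(c * ((-1:ℝ)^(k+1) * ∏ i, x i)) := by
      rw [← hων]
      rw [hcdef]
      field_simp
    -- final algebra
    have hA1 : (1:ℝ) ≤ (1+ξ)^(k+1) := one_le_pow₀ (by linarith)
    have hA0 : (0:ℝ) < (1+ξ)^(k+1) := by positivity
    have hfacpos : (0:ℝ) < ((k+1).factorial : ℝ) := by positivity
    have hceq : c = (-1:ℝ)^k * (k.factorial : ℝ) / ((1+ξ)^(k+1) * ((k+1).factorial : ℝ)) := by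
      have := hkey
      rw [Dlog] at this
      field_simp at this ⊢
      linarith
    have hprodpos : (0:ℝ) < ∏ i, x i := Finset.prod_pos (fun i _ => hpos i)
    have hL0 : L.eval 0 = (∏ i, x i) / (((k+1:ℕ):ℝ) * (1+ξ)^(k+1)) := by
      rw [hLeval, hceq]
      have hsign : (-1:ℝ)^k * (-1)^(k+1) = -1 := by
        rw [← pow_add]
        exact Odd.neg_one_pow ⟨k, by ring⟩
      have hfac : ((k+1).factorial : ℝ) = ((k+1:ℕ):ℝ) * (k.factorial : ℝ) := by
        rw [Nat.factorial_succ]; push_cast; ring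
      field_simp
      rw [hfac]
      push_cast
      linear_combination (-((k.factorial:ℝ) * ((k:ℝ)+1))) * hsign
    -- bound the sum
    have hsum : L.eval 0 ≤ (1 / ((k+1:ℕ):ℝ)) * ∏ i, x i := by
      rw [hL0]
      rw [div_le_iff₀ (by positivity)]
      have h2 : (1 / ((k+1:ℕ):ℝ)) * (∏ i, x i) * (((k+1:ℕ):ℝ) * (1+ξ)^(k+1))
          = (∏ i, x i) * (1+ξ)^(k+1) := by
        field_simp
      rw [h2]
      nlinarith
    -- identify L.eval 0 with the weighted sum of logs
    have hbasis : ∀ i : Fin (k+1), (Lagrange.basis Finset.univ x i).eval 0 =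
        (∏ j ∈ Finset.univ.erase i, x j) / (∏ j ∈ Finset.univ.erase i, (x j - x i)) := by
      intro i
      rw [Lagrange.basis, Polynomial.eval_prod]
      rw [← Finset.prod_div_distrib]
      apply Finset.prod_congr rfl
      intro j hj
      have hij : x i ≠ x j := fun h => (Finset.mem_erase.mp hj).1 (hinj h.symm)
      have hji : x j - x i ≠ 0 := sub_ne_zero.mpr (fun h => hij h.symm)
      rw [Lagrange.basisDivisor]
      simp only [eval_mul, eval_C, eval_sub, eval_X]
      rw [zero_sub]
      have h3 : -(x j) + x i ≠ 0 := by
        intro h; exact hij (by linarith)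
      have h4 : x i - x j ≠ 0 := sub_ne_zero.mpr hij
      field_simp
      ring
    have hsumrepr : L.eval 0 = ∑ i, Real.log (1 + x i) *
        ((∏ j ∈ Finset.univ.erase i, x j) / (∏ j ∈ Finset.univ.erase i, (x j - x i))) := by
      rw [hLdef, Lagrange.interpolate_apply, Polynomial.eval_finset_sum]
      apply Finset.sum_congr rfl
      intro i _
      rw [eval_mul, eval_C, hbasis i, hr]
    -- put it together
    have hLHS : ∏ i, (1 + x i) ^
        ((∏ j ∈ Finset.univ.erase i, x j) / (∏ j ∈ Finset.univ.erase i, (x j - x i)))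
        = Real.exp (∑ i, Real.log (1 + x i) *
          ((∏ j ∈ Finset.univ.erase i, x j) / (∏ j ∈ Finset.univ.erase i, (x j - x i)))) := by
      rw [Real.exp_sum]
      apply Finset.prod_congr rfl
      intro i _
      rw [Real.rpow_def_of_pos (by linarith [hpos i])]
    rw [hLHS]
    apply Real.exp_le_exp.mpr
    rw [← hsumrepr]
    exact_mod_cast hsum
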